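/- Let S be a network with no source nodes such that the game G(S) has no multiple-product Nash equilibrium (every Nash equilibrium s satisfies |prod(s)| ≤ 1). Then S is not ∃w-vulnerable: for every Nash equilibrium s of G(S) and every expansion S' of S, no improvement path in G(S') starting at s ends in a Nash equilibrium s' with s >_w s'. -/

import Mathlib

open scoped Classical
noncomputable section

/-- A social network: weighted directed graph, product assignment, thresholds. -/
structure SN (V P : Type) [Fintype V] where
  /-- `E j i` : there is an edge from `j` to `i` (so `j` is a neighbour of `i`). -/
  E : V → V → Prop
  /-- `w j i` is the weight of the edge from `j` to `i`. -/
  w : V → V → ℝ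
  /-- The product set of each node (nonempty). -/
  Pr : V → Set P
  /-- Threshold function. -/
  theta : V → P → ℝ
  PrNe : ∀ i, (Pr i).Nonempty
  wNonneg : ∀ j i, 0 ≤ w j i
  wLeOne : ∀ j i, w j i ≤ 1
  wSumLeOne : ∀ i, (∑ j ∈ Finset.univ.filter (fun j => E j i), w j i) ≤ 1
  thetaPos : ∀ i t, 0 < theta i t
  thetaLeOne : ∀ i t, theta i t ≤ 1

namespace SN

variable {V P : Type} [Fintype V]

/-- A source node has no in-neighbours. -/
def isSource (N : SN V P) (i : V) : Prop := ∀ j, ¬ N.E j i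

/-- A joint strategy is valid if every chosen product belongs to the player's product set
(`none` is the abstention strategy `t₀`). -/
def valid (N : SN V P) (s : V → Option P) : Prop :=
  ∀ i t, s i = some t → t ∈ N.Pr i

/-- `a` is an admissible strategy for player `i`. -/
def validMove (N : SN V P) (i : V) (a : Option P) : Prop :=
  ∀ t, a = some t → t ∈ N.Pr i

/-- The payoff of player `i` in the social network game (with constant `c0` for sources). -/
def payoff (N : SN V P) (c0 : ℝ) (s : V → Option P) (i : V) : ℝ :=
  match s i with
  | none => 0
  | some t =>
    if N.isSource i then c0
    else (∑ j ∈ Finset.univ.filter (fun j => N.E j i ∧ s j = some t), N.w j i) - N.theta i t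

/-- Nash equilibrium of the social network game. -/
def Nash [DecidableEq V] (N : SN V P) (c0 : ℝ) (s : V → Option P) : Prop :=
  N.valid s ∧ ∀ i a, N.validMove i a →
    N.payoff c0 (Function.update s i a) i ≤ N.payoff c0 s i

/-- A profitable deviation from `s` to `s'`. -/
def profDev [DecidableEq V] (N : SN V P) (c0 : ℝ) (s s' : V → Option P) : Prop :=
  ∃ i a, N.validMove i a ∧ s' = Function.update s i a ∧
    N.payoff c0 s i < N.payoff c0 s' i

/-- A finite improvement path from `s` to `s'` (a sequence of profitable deviations). -/
def impPath [DecidableEq V] (N : SN V P) (c0 : ℝ) (s s' : V → Option P) : Prop :=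
  ∃ k, ∃ σ : Fin (k+1) → (V → Option P), σ 0 = s ∧ σ (Fin.last k) = s' ∧
    ∀ m : Fin k, N.profDev c0 (σ m.castSucc) (σ m.succ)

/-- `N'` results from `N` by adding product `t` to the product set of node `i`. -/
def expansionAt (N N' : SN V P) (i : V) (t : P) : Prop :=
  N'.E = N.E ∧ N'.w = N.w ∧ N'.theta = N.theta ∧ t ∉ N.Pr i ∧
  N'.Pr = Function.update N.Pr i (insert t (N.Pr i)) ∧ ∀ j, j ≠ i → N'.Pr j = N.Pr j

/-- `N'` is an expansion of `N`. -/
def expansion (N N' : SN V P) : Prop := ∃ i t, expansionAt N N' i t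

/-- `N'` results from `N` by removing product `t` from the product set of node `i`. -/
def contractionAt (N N' : SN V P) (i : V) (t : P) : Prop :=
  N'.E = N.E ∧ N'.w = N.w ∧ N'.theta = N.theta ∧ t ∈ N.Pr i ∧
  N'.Pr = Function.update N.Pr i (N.Pr i \ {t})

/-- The underlying graph is the simple cycle `0 → 1 → ⋯ → (n-1) → 0`. -/
def simpleCycle {n : ℕ} [NeZero n] (N : SN (Fin n) P) : Prop :=
  ∀ j i, N.E j i ↔ i = j + 1

end SN


section Helpers

variable {V P : Type} [Fintype V]

lemma payoff_none_eq (N : SN V P) (c0 : ℝ) {s : V → Option P} {i : V} (h : s i = none) :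
    N.payoff c0 s i = 0 := by
  simp only [SN.payoff, h]

lemma payoff_some_eq (N : SN V P) (c0 : ℝ) {s : V → Option P} {i : V} {t : P}
    (h : s i = some t) (hns : ¬ N.isSource i) :
    N.payoff c0 s i =
      (∑ j ∈ Finset.univ.filter (fun j => N.E j i ∧ s j = some t), N.w j i) - N.theta i t := by
  simp only [SN.payoff, h, if_neg hns]

lemma nash_payoff_nonneg [DecidableEq V] (N : SN V P) (c0 : ℝ) {s : V → Option P}
    (hs : N.Nash c0 s) (i : V) : 0 ≤ N.payoff c0 s i := by
  have h := hs.2 i none (fun t ht => by cases ht)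
  have h0 : N.payoff c0 (Function.update s i none) i = 0 :=
    payoff_none_eq N c0 (by simp)
  linarith

end Helpers

/-- a network without source nodes whose game has no multiple-product Nash
equilibrium is not ∃w-vulnerable: for every Nash equilibrium `s` and every expansion
`S'`, no improvement path in `G(S')` starting at `s` ends in a Nash equilibrium `s'`
with `s >_w s'`. -/

theorem stmt8 {V P : Type} [Fintype V] [DecidableEq V] (N : SN V P)
    (hnosrc : ∀ i, ¬ N.isSource i) (c0 : ℝ)
    (hsingle : ∀ s, N.Nash c0 s → ∀ t1 t2 : P,
      (∃ i, s i = some t1) → (∃ i, s i = some t2) → t1 = t2) :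
    ∀ s, N.Nash c0 s → ∀ N' : SN V P, N.expansion N' →
      ∀ s', N'.impPath c0 s s' → N'.Nash c0 s' →
        ¬ ((∀ i, N'.payoff c0 s' i ≤ N.payoff c0 s i) ∧
           ∃ i, N'.payoff c0 s' i < N.payoff c0 s i) := by
  intro s hs N' hexp s' hpath hs' hcon
  obtain ⟨hdec, j, hj⟩ := hcon
  obtain ⟨i0, t0, hE, hw, hth, ht0, hPr, hPrj⟩ := hexp
  -- payoffs in N' coincide with payoffs in N
  have hpe : ∀ (σ : V → Option P) (i : V), N'.payoff c0 σ i = N.payoff c0 σ i := by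
    intro σ i
    unfold SN.payoff SN.isSource
    rw [hE, hw, hth]
  obtain ⟨K, σ, hσ0, hσl, hdev⟩ := hpath
  rcases K with _ | k
  · -- trivial path : s' = s
    have hss : s' = s := by rw [← hσ0, ← hσl]; rfl
    rw [hss, hpe] at hj
    exact lt_irrefl _ hj
  -- first deviation analysis
  obtain ⟨i1, a1, hva1, heq1, hlt1⟩ := hdev 0
  have hc0 : Fin.castSucc (0 : Fin (k+1)) = (0 : Fin (k+2)) := rfl
  rw [hc0, hσ0] at heq1 hlt1
  rw [heq1, hpe, hpe] at hlt1
  have hnv : ¬ N.validMove i1 a1 := fun hv => absurd hlt1 (not_lt.2 (hs.2 i1 a1 hv))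
  obtain ⟨u, hau, hu⟩ : ∃ u, a1 = some u ∧ u ∉ N.Pr i1 := by
    by_contra hcon2
    push_neg at hcon2
    exact hnv (fun t ht => hcon2 t ht)
  have hi1 : i1 = i0 := by
    by_contra hne
    have hmem := hva1 u hau
    rw [hPrj i1 hne] at hmem
    exact hu hmem
  subst hi1
  have hut0 : u = t0 := by
    have hmem := hva1 u hau
    rw [hPr] at hmem
    simp only [Function.update_self, Set.mem_insert_iff] at hmem
    rcases hmem with h | h
    · exact h
    · exact absurd h hu
  subst hut0
  subst hau
  -- hlt1 : N.payoff c0 s i1 < N.payoff c0 (update s i1 (some u)) i1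
  have hvm' : N'.validMove i1 (some u) := by
    intro t ht
    injection ht with ht
    subst ht
    rw [hPr]
    simp
  have hP2 : N.payoff c0 (Function.update s' i1 (some u)) i1 ≤ N.payoff c0 s' i1 := by
    have h := hs'.2 i1 (some u) hvm'
    rwa [hpe, hpe] at h
  have hns1 : ¬ N.isSource i1 := hnosrc i1
  have hP1e := payoff_some_eq N c0
    (show Function.update s i1 (some u) i1 = some u by simp) hns1
  have hP2e := payoff_some_eq N c0
    (show Function.update s' i1 (some u) i1 = some u by simp) hns1
  have hdec1 := hdec i1
  rw [hpe] at hdec1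
  have hchain : N.payoff c0 (Function.update s' i1 (some u)) i1
      < N.payoff c0 (Function.update s i1 (some u)) i1 := by linarith
  -- some other node already plays u in s
  obtain ⟨k0, hk0ne, hk0⟩ : ∃ k0, k0 ≠ i1 ∧ s k0 = some u := by
    by_contra hno
    push_neg at hno
    have hsub : (Finset.univ.filter
        (fun jj => N.E jj i1 ∧ Function.update s i1 (some u) jj = some u)) ⊆
        (Finset.univ.filter
        (fun jj => N.E jj i1 ∧ Function.update s' i1 (some u) jj = some u)) := by
      intro x hx
      simp only [Finset.mem_filter, Finset.mem_univ, true_and] at hx ⊢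
      rcases hx with ⟨hex, hsx⟩
      refine ⟨hex, ?_⟩
      by_cases hxi : x = i1
      · subst hxi; simp
      · rw [Function.update_of_ne hxi] at hsx
        exact absurd hsx (hno x hxi)
    have hsum := Finset.sum_le_sum_of_subset_of_nonneg hsub
      (fun x _ _ => N.wNonneg x i1)
    rw [hP1e, hP2e] at hchain
    linarith
  have H : ∀ i v, s i = some v → v = u := fun i v h =>
    hsingle s hs v u ⟨i, h⟩ ⟨k0, hk0⟩
  have hnnS : ∀ i, 0 ≤ N.payoff c0 s i := nash_payoff_nonneg N c0 hs
  -- invariant along the path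
  have hinv : ∀ m : Fin (k+2),
      (∀ i, σ m i = some u ∨ σ m i = none) ∧
      (∀ i, s i = some u → σ m i = some u) ∧
      (∀ i, σ m i = some u → N.payoff c0 s i ≤ N.payoff c0 (σ m) i) := by
    intro m
    induction m using Fin.induction with
    | zero =>
      rw [hσ0]
      refine ⟨?_, fun i h => h, fun i _ => le_refl _⟩
      intro i
      cases hsi : s i with
      | none => exact Or.inr rfl
      | some v => exact Or.inl (by rw [H i v hsi])
    | succ m ih =>
      obtain ⟨i, a, hva, heq, hlt⟩ := hdev m
      rw [heq] at hlt ⊢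
      rw [hpe, hpe] at hlt
      obtain ⟨ha1, ha2, ha3⟩ := ih
      set τ := σ (Fin.castSucc m) with hτdef
      have hsτ : N.payoff c0 s i ≤ N.payoff c0 τ i := by
        rcases ha1 i with h | h
        · exact ha3 i h
        · have h1 : N.payoff c0 τ i = 0 := payoff_none_eq N c0 h
          have h2 : s i = none := by
            cases hsi : s i with
            | none => rfl
            | some v =>
              rw [H i v hsi] at hsi
              have h3 := ha2 i hsi
              rw [h] at h3
              exact nomatch h3
          rw [payoff_none_eq N c0 h2, h1]
      have hkey : τ i = none ∧ a = some u := by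
        rcases ha : a with _ | v
        · exfalso
          have h0 : N.payoff c0 (Function.update τ i none) i = 0 :=
            payoff_none_eq N c0 (by simp)
          rw [ha] at hlt
          have := hnnS i
          linarith
        · by_cases hv : v = u
          · subst hv
            rcases ha1 i with h | h
            · exfalso
              rw [ha, ← h, Function.update_eq_self] at hlt
              exact lt_irrefl _ hlt
            · exact ⟨h, rfl⟩
          · exfalso
            have hvN : N.validMove i (some v) := by
              intro t ht
              injection ht with ht
              subst ht
              have hmem := hva v (by rw [ha])
              by_cases hii : i = i1
              · subst hii
                rw [hPr] at hmem
                simp only [Function.update_self, Set.mem_insert_iff] at hmem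
                rcases hmem with h | h
                · exact absurd h hv
                · exact h
              · rwa [hPrj i hii] at hmem
            have hdevS := hs.2 i (some v) hvN
            have hfeq : (Finset.univ.filter
                (fun jj => N.E jj i ∧ Function.update τ i (some v) jj = some v)) =
                (Finset.univ.filter
                (fun jj => N.E jj i ∧ Function.update s i (some v) jj = some v)) := by
              apply Finset.filter_congr
              intro x _
              by_cases hxi : x = i
              · subst hxi; simp
              · rw [Function.update_of_ne hxi, Function.update_of_ne hxi]
                constructor
                · rintro ⟨he, hx⟩
                  exfalso
                  rcases ha1 x with h | h
                  · rw [h] at hx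
                    exact hv (Option.some.inj hx).symm
                  · rw [h] at hx
                    exact nomatch hx
                · rintro ⟨he, hx⟩
                  exact absurd (H x v hx) hv
            have hpay_eq : N.payoff c0 (Function.update τ i (some v)) i
                = N.payoff c0 (Function.update s i (some v)) i := by
              rw [payoff_some_eq N c0
                    (show Function.update τ i (some v) i = some v by simp) (hnosrc i),
                  payoff_some_eq N c0
                    (show Function.update s i (some v) i = some v by simp) (hnosrc i),
                  hfeq]
            rw [ha] at hlt
            linarith
      obtain ⟨hτi, hat0⟩ := hkey
      subst hat0
      refine ⟨?_, ?_, ?_⟩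
      · intro x
        by_cases hxi : x = i
        · subst hxi; left; simp
        · rw [Function.update_of_ne hxi]; exact ha1 x
      · intro x hx
        by_cases hxi : x = i
        · subst hxi; simp
        · rw [Function.update_of_ne hxi]; exact ha2 x hx
      · intro x hx
        by_cases hxi : x = i
        · subst hxi
          have hsi : s x = none := by
            cases hsi : s x with
            | none => rfl
            | some v =>
              rw [H x v hsi] at hsi
              have h3 := ha2 x hsi
              rw [hτi] at h3
              exact nomatch h3
          have h0 : N.payoff c0 s x = 0 := payoff_none_eq N c0 hsi
          have hτ0 : N.payoff c0 τ x = 0 := payoff_none_eq N c0 hτi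
          rw [h0]
          linarith
        · rw [Function.update_of_ne hxi] at hx
          have hold := ha3 x hx
          have hsub : (Finset.univ.filter
              (fun jj => N.E jj x ∧ τ jj = some u)) ⊆
              (Finset.univ.filter
              (fun jj => N.E jj x ∧ Function.update τ i (some u) jj = some u)) := by
            intro y hy
            simp only [Finset.mem_filter, Finset.mem_univ, true_and] at hy ⊢
            rcases hy with ⟨hey, hyy⟩
            refine ⟨hey, ?_⟩
            by_cases hyi : y = i
            · subst hyi; simp
            · rw [Function.update_of_ne hyi]; exact hyy
          have hsum := Finset.sum_le_sum_of_subset_of_nonneg hsub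
            (fun y _ _ => N.wNonneg y x)
          have he1 := payoff_some_eq N c0 hx (hnosrc x)
          have he2 := payoff_some_eq N c0
            (show Function.update τ i (some u) x = some u by
              rw [Function.update_of_ne hxi]; exact hx) (hnosrc x)
          rw [he2]
          rw [he1] at hold
          linarith
  -- conclude
  have hfin := hinv (Fin.last (k+1))
  rw [hσl] at hfin
  obtain ⟨f1, f2, f3⟩ := hfin
  rw [hpe] at hj
  rcases f1 j with h | h
  · exact absurd hj (not_lt.2 (f3 j h))
  · have h0 : N.payoff c0 s' j = 0 := payoff_none_eq N c0 h
    have hsj : s j = none := by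
      cases hsj : s j with
      | none => rfl
      | some v =>
        rw [H j v hsj] at hsj
        have h3 := f2 j hsj
        rw [h] at h3
        exact nomatch h3
    rw [h0, payoff_none_eq N c0 hsj] at hj
    exact lt_irrefl _ hj
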